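/- Let H be a real Hilbert space, B₁ : H → 2^H a maximally monotone operator, and B₂ : H → H a κ-cocoercive operator for some κ > 0. Suppose the set zer(B₁ + B₂) = {s ∈ H : 0 ∈ B₁(s) + B₂(s)} is nonempty. Let γ ∈ (0, 2κ), set δ := 2 − γ/(2κ), and let (ρ_n) satisfy ρ_n ∈ (0, δ) for all n and Σ_n ρ_n(δ − ρ_n) = ∞. Then for any s₀ ∈ H, the sequence generated by s_{n+1} = ρ_n (Id + γB₁)⁻¹(s_n − γB₂(s_n)) + (1 − ρ_n)s_n converges weakly to a point ŝ ∈ zer(B₁ + B₂). -/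

import Mathlib

open Filter Topology RealInnerProductSpace

set_option maxHeartbeats 1000000

noncomputable section

/-- A set-valued operator on a real inner product space is monotone. -/
def MonotoneOp {H : Type*} [NormedAddCommGroup H] [InnerProductSpace ℝ H]
    (A : H → Set H) : Prop :=
  ∀ ⦃x x' y y' : H⦄, y ∈ A x → y' ∈ A x' → (0 : ℝ) ≤ ⟪x - x', y - y'⟫

/-- A set-valued operator is maximally monotone if it is monotone and its graph is not
properly contained in the graph of any monotone operator. -/
def MaximallyMonotone {H : Type*} [NormedAddCommGroup H] [InnerProductSpace ℝ H]
    (A : H → Set H) : Prop :=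
  MonotoneOp A ∧ ∀ B : H → Set H, MonotoneOp B → (∀ x, A x ⊆ B x) → ∀ x, B x ⊆ A x

/-- Weak convergence of a sequence in a real inner product space. -/
def WeakLim {H : Type*} [NormedAddCommGroup H] [InnerProductSpace ℝ H]
    (z : ℕ → H) (l : H) : Prop :=
  ∀ w : H, Tendsto (fun n => ⟪z n, w⟫) atTop (nhds ⟪l, w⟫)

/-- Convex conjugate of an extended-real-valued function. -/
def ConjE {H : Type*} [NormedAddCommGroup H] [InnerProductSpace ℝ H]
    (F : H → EReal) (y : H) : EReal :=
  ⨆ x : H, ((⟪x, y⟫ : ℝ) : EReal) - F x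

/-- Subdifferential of an extended-real-valued function. -/
def SubdiffE {H : Type*} [NormedAddCommGroup H] [InnerProductSpace ℝ H]
    (F : H → EReal) (x : H) : Set H :=
  {u | ∀ y, F x + ((⟪u, y - x⟫ : ℝ) : EReal) ≤ F y}

/-- Properness of an extended-real-valued function. -/
def ProperE {H : Type*} (F : H → EReal) : Prop :=
  (∃ x, F x ≠ ⊤) ∧ ∀ x, F x ≠ ⊥

/-- Convexity of an extended-real-valued function. -/
def ConvexE {H : Type*} [AddCommGroup H] [Module ℝ H] (F : H → EReal) : Prop :=
  ∀ x y : H, ∀ a b : ℝ, 0 ≤ a → 0 ≤ b → a + b = 1 →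
    F (a • x + b • y) ≤ (a : EReal) * F x + (b : EReal) * F y

/-- `p` is the (unique) minimizer defining `prox_{γ F}(x)`. -/
def IsProxPt {H : Type*} [NormedAddCommGroup H] [InnerProductSpace ℝ H]
    (γ : ℝ) (F : H → EReal) (x p : H) : Prop :=
  (∀ y, F p + ((1 / (2 * γ) * ‖p - x‖ ^ 2 : ℝ) : EReal)
      ≤ F y + ((1 / (2 * γ) * ‖y - x‖ ^ 2 : ℝ) : EReal)) ∧
  ∀ q, (∀ y, F q + ((1 / (2 * γ) * ‖q - x‖ ^ 2 : ℝ) : EReal)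
      ≤ F y + ((1 / (2 * γ) * ‖y - x‖ ^ 2 : ℝ) : EReal)) → q = p

/-- Firm nonexpansiveness: `2T - Id` is nonexpansive. -/
def FirmlyNonexpansive {H : Type*} [NormedAddCommGroup H] [InnerProductSpace ℝ H]
    (T : H → H) : Prop :=
  ∀ x y : H, ‖((2 : ℝ) • T x - x) - ((2 : ℝ) • T y - y)‖ ≤ ‖x - y‖


section AuxLemmas

lemma aux_ultrafilter_weak_limit {H : Type*} [NormedAddCommGroup H] [InnerProductSpace ℝ H]
    [CompleteSpace H] (s : ℕ → H) (C : ℝ) (hC : ∀ n, ‖s n‖ ≤ C)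
    (U : Ultrafilter ℕ) :
    ∃ p : H, ∀ w : H, Tendsto (fun n => ⟪s n, w⟫) (U : Filter ℕ) (𝓝 ⟪p, w⟫) := by
  have hex : ∀ w : H, ∃ L : ℝ, Tendsto (fun n => ⟪s n, w⟫) (U : Filter ℕ) (𝓝 L) := by
    intro w
    have hmem : ∀ n, ⟪s n, w⟫ ∈ Set.Icc (-(C * ‖w‖)) (C * ‖w‖) := by
      intro n
      have h1 : |⟪s n, w⟫| ≤ ‖s n‖ * ‖w‖ := abs_real_inner_le_norm _ _
      have h2 : ‖s n‖ * ‖w‖ ≤ C * ‖w‖ :=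
        mul_le_mul_of_nonneg_right (hC n) (norm_nonneg w)
      have := abs_le.mp (h1.trans h2)
      exact ⟨this.1, this.2⟩
    obtain ⟨L, _, hL⟩ := (isCompact_Icc (a := -(C * ‖w‖)) (b := C * ‖w‖)).ultrafilter_le_nhds
      (U.map (fun n => ⟪s n, w⟫))
      (by rw [Ultrafilter.coe_map, le_principal_iff]; exact mem_map.mpr (Eventually.of_forall hmem))
    exact ⟨L, by rwa [Ultrafilter.coe_map] at hL⟩
  choose φ hφ using hex
  have hadd : ∀ u v : H, φ (u + v) = φ u + φ v := by
    intro u v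
    refine tendsto_nhds_unique (hφ (u + v)) ?_
    simpa [inner_add_right] using (hφ u).add (hφ v)
  have hsmul : ∀ (c : ℝ) (u : H), φ (c • u) = c * φ u := by
    intro c u
    refine tendsto_nhds_unique (hφ (c • u)) ?_
    simpa [real_inner_smul_right, mul_comm] using (hφ u).const_mul c
  have hbd : ∀ w : H, ‖φ w‖ ≤ C * ‖w‖ := by
    intro w
    have : Tendsto (fun n => |⟪s n, w⟫|) (U : Filter ℕ) (𝓝 |φ w|) := (hφ w).abs
    rw [Real.norm_eq_abs]
    refine le_of_tendsto this (Eventually.of_forall fun n => ?_)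
    exact (abs_real_inner_le_norm _ _).trans (mul_le_mul_of_nonneg_right (hC n) (norm_nonneg w))
  let f : H →ₗ[ℝ] ℝ :=
    { toFun := φ, map_add' := hadd, map_smul' := hsmul }
  let g : H →L[ℝ] ℝ := f.mkContinuous C hbd
  refine ⟨(InnerProductSpace.toDual ℝ H).symm g, fun w => ?_⟩
  have h := InnerProductSpace.toDual_symm_apply (𝕜 := ℝ) (E := H) (x := w) (y := g)
  rw [show (inner ℝ ((InnerProductSpace.toDual ℝ H).symm g) w : ℝ) = g w from h]
  exact hφ w

lemma aux_convex_norm_sq {H : Type*} [NormedAddCommGroup H] [InnerProductSpace ℝ H]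
    (u v : H) (t : ℝ) :
    ‖(1 - t) • u + t • v‖ ^ 2 = (1 - t) * ‖u‖ ^ 2 + t * ‖v‖ ^ 2 - t * (1 - t) * ‖u - v‖ ^ 2 := by
  simp only [← real_inner_self_eq_norm_sq]
  simp only [inner_add_left, inner_add_right, inner_sub_left, inner_sub_right,
    real_inner_smul_left, real_inner_smul_right, real_inner_comm u v]
  ring

lemma aux_norm_le_of_sq {H : Type*} [NormedAddCommGroup H] (a b : H)
    (h : ‖a‖ ^ 2 ≤ ‖b‖ ^ 2) : ‖a‖ ≤ ‖b‖ := by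
  nlinarith [norm_nonneg a, norm_nonneg b]

lemma aux_real_ineq (κ γ δ A E P Q Rr Bb : ℝ) (hκ : 0 < κ) (hγ0 : 0 < γ) (hγ2 : γ < 2 * κ)
    (hδ : δ = 2 - γ / (2 * κ)) (hF1 : A ≤ P - γ * Q) (hF2 : κ * Bb ≤ Rr)
    (hsq : 0 ≤ 4 * κ ^ 2 * Bb + 4 * κ * (Q - Rr) + (A - 2 * P + E)) :
    E + 2 * δ * (P - E) + δ ^ 2 * (A - 2 * P + E) ≤ E := by
  have hκ2 : 0 < 2 * κ := by linarith
  have h2δ : 2 - δ = γ / (2 * κ) := by rw [hδ]; ring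
  have h2δ0 : 0 < 2 - δ := by rw [h2δ]; positivity
  have hδ1 : 1 < δ := by
    rw [hδ]
    have : γ / (2 * κ) < 1 := (div_lt_one hκ2).mpr hγ2
    linarith
  have step1 : 0 ≤ 4 * κ * Q + (A - 2 * P + E) := by nlinarith
  have step2 : P - E ≤ (4 * κ - γ) * Q := by nlinarith
  have h1 : δ * (A - 2 * P + E) ≤ δ * (E - P - γ * Q) := by nlinarith
  have h3 : (2 - δ) * (4 * κ - γ) = δ * γ := by
    rw [h2δ, hδ]; field_simp; ring
  have h2' : (2 - δ) * (P - E) ≤ δ * γ * Q := by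
    calc (2 - δ) * (P - E) ≤ (2 - δ) * ((4 * κ - γ) * Q) :=
          mul_le_mul_of_nonneg_left step2 h2δ0.le
      _ = δ * γ * Q := by rw [← mul_assoc, h3]
  have step3 : 2 * (P - E) + δ * (A - 2 * P + E) ≤ 0 := by nlinarith [h1, h2']
  nlinarith [step3, mul_le_mul_of_nonneg_left step3 (by linarith : (0:ℝ) ≤ δ)]

lemma aux_norm_smul_sub {H : Type*} [NormedAddCommGroup H] [InnerProductSpace ℝ H]
    (c : ℝ) (b e : H) :
    ‖c • b - e‖ ^ 2 = c ^ 2 * ‖b‖ ^ 2 - 2 * c * ⟪e, b⟫ + ‖e‖ ^ 2 := by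
  simp only [← real_inner_self_eq_norm_sq, inner_sub_left, inner_sub_right,
    real_inner_smul_left, real_inner_smul_right, real_inner_comm b e]
  ring

lemma aux_S_nonexpansive {H : Type*} [NormedAddCommGroup H] [InnerProductSpace ℝ H]
    (κ γ δ : ℝ) (hκ : 0 < κ) (hγ0 : 0 < γ) (hγ2 : γ < 2 * κ) (hδ : δ = 2 - γ / (2 * κ))
    (e a b : H) (hF1 : ‖a‖ ^ 2 ≤ ⟪a, e - γ • b⟫) (hF2 : κ * ‖b‖ ^ 2 ≤ ⟪e, b⟫) :
    ‖e + δ • (a - e)‖ ≤ ‖e‖ := by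
  have exp1 : ‖(2 * κ) • b + (a - e)‖ ^ 2
      = 4 * κ ^ 2 * ‖b‖ ^ 2 + 4 * κ * (⟪a, b⟫ - ⟪e, b⟫) + (‖a‖ ^ 2 - 2 * ⟪a, e⟫ + ‖e‖ ^ 2) := by
    simp only [← real_inner_self_eq_norm_sq, inner_add_left, inner_add_right, inner_sub_left,
      inner_sub_right, real_inner_smul_left, real_inner_smul_right, real_inner_comm b a,
      real_inner_comm b e, real_inner_comm e a]
    ring
  have exp2 : ⟪a, e - γ • b⟫ = ⟪a, e⟫ - γ * ⟪a, b⟫ := by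
    simp [inner_sub_right, real_inner_smul_right]
  have exp3 : ‖e + δ • (a - e)‖ ^ 2
      = ‖e‖ ^ 2 + 2 * δ * (⟪a, e⟫ - ‖e‖ ^ 2) + δ ^ 2 * (‖a‖ ^ 2 - 2 * ⟪a, e⟫ + ‖e‖ ^ 2) := by
    simp only [← real_inner_self_eq_norm_sq, inner_add_left, inner_add_right, inner_sub_left,
      inner_sub_right, real_inner_smul_left, real_inner_smul_right, real_inner_comm e a]
    ring
  apply aux_norm_le_of_sq
  rw [exp3]
  exact aux_real_ineq κ γ δ (‖a‖ ^ 2) (‖e‖ ^ 2) ⟪a, e⟫ ⟪a, b⟫ ⟪e, b⟫ (‖b‖ ^ 2) hκ hγ0 hγ2 hδ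
    (by rw [exp2] at hF1; linarith) hF2 (by rw [← exp1]; positivity)

end AuxLemmas

/-- weak convergence of the relaxed forward-backward iteration
(Condat, Lemma 4.4). -/
theorem relaxed_forward_backward_weak_convergence
    {H : Type*} [NormedAddCommGroup H] [InnerProductSpace ℝ H] [CompleteSpace H]
    (B₁ : H → Set H) (hB₁ : MaximallyMonotone B₁)
    (B₂ : H → H) (κ : ℝ) (hκ : 0 < κ)
    (hB₂ : FirmlyNonexpansive (fun x => κ • B₂ x))
    (hzer : ∃ s : H, ∃ u ∈ B₁ s, u + B₂ s = 0)
    (γ : ℝ) (hγ : γ ∈ Set.Ioo 0 (2 * κ))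
    (δ : ℝ) (hδ : δ = 2 - γ / (2 * κ))
    (ρ : ℕ → ℝ) (hρ : ∀ n, ρ n ∈ Set.Ioo 0 δ)
    (hρsum : Tendsto (fun N => ∑ n ∈ Finset.range N, ρ n * (δ - ρ n)) atTop atTop)
    (R : H → H)
    (hRres : ∀ x, ∃ w ∈ B₁ (R x), x - R x = γ • w)
    (hRuniq : ∀ x p, (∃ w ∈ B₁ p, x - p = γ • w) → p = R x)
    (s : ℕ → H)
    (hs : ∀ n, s (n + 1) = ρ n • R (s n - γ • B₂ (s n)) + (1 - ρ n) • s n) :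
    ∃ sh : H, WeakLim s sh ∧ ∃ u ∈ B₁ sh, u + B₂ sh = 0 := by
  obtain ⟨hγ0, hγ2κ⟩ := hγ
  have hκ2 : (0:ℝ) < 2 * κ := by linarith
  have hδ1 : (1:ℝ) < δ := by
    rw [hδ]
    have h1 : γ / (2 * κ) < 1 := (div_lt_one hκ2).mpr hγ2κ
    linarith
  have hδ0 : (0:ℝ) < δ := by linarith
  -- cocoercivity of B₂
  have hco : ∀ x y : H, κ * ‖B₂ x - B₂ y‖ ^ 2 ≤ ⟪x - y, B₂ x - B₂ y⟫ := by
    intro x y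
    have h : ‖((2:ℝ) • (κ • B₂ x) - x) - ((2:ℝ) • (κ • B₂ y) - y)‖ ≤ ‖x - y‖ := hB₂ x y
    have hv : ((2:ℝ) • (κ • B₂ x) - x) - ((2:ℝ) • (κ • B₂ y) - y)
        = (2 * κ) • (B₂ x - B₂ y) - (x - y) := by module
    rw [hv] at h
    have h2 : ‖(2 * κ) • (B₂ x - B₂ y) - (x - y)‖ ^ 2 ≤ ‖x - y‖ ^ 2 :=
      pow_le_pow_left₀ (norm_nonneg _) h 2
    have e1 := aux_norm_smul_sub (2 * κ) (B₂ x - B₂ y) (x - y)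
    nlinarith [h2, e1]
  -- R is firmly nonexpansive
  have hRfirm : ∀ u v : H, ‖R u - R v‖ ^ 2 ≤ ⟪R u - R v, u - v⟫ := by
    intro u v
    obtain ⟨wu, hwu, hwu'⟩ := hRres u
    obtain ⟨wv, hwv, hwv'⟩ := hRres v
    have hmono := hB₁.1 hwu hwv
    have key : (0:ℝ) ≤ ⟪R u - R v, (u - R u) - (v - R v)⟫ := by
      rw [hwu', hwv', ← smul_sub, real_inner_smul_right]
      exact mul_nonneg hγ0.le hmono
    have expand : ⟪R u - R v, (u - R u) - (v - R v)⟫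
        = ⟪R u - R v, u - v⟫ - ‖R u - R v‖ ^ 2 := by
      rw [show (u - R u) - (v - R v) = (u - v) - (R u - R v) by abel,
        inner_sub_right, real_inner_self_eq_norm_sq]
    rw [expand] at key
    linarith
  set T : H → H := fun x => R (x - γ • B₂ x) with hT
  set S : H → H := fun x => x + δ • (T x - x) with hS
  have hSz : ∀ x, S x = x + δ • (T x - x) := fun x => rfl
  have hTz : ∀ x, T x = R (x - γ • B₂ x) := fun x => rfl
  have hSnon : ∀ x y : H, ‖S x - S y‖ ≤ ‖x - y‖ := by
    intro x y
    have hv : S x - S y = (x - y) + δ • ((T x - T y) - (x - y)) := by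
      rw [hSz, hSz]; module
    have hF1 : ‖T x - T y‖ ^ 2 ≤ ⟪T x - T y, (x - y) - γ • (B₂ x - B₂ y)⟫ := by
      have h := hRfirm (x - γ • B₂ x) (y - γ • B₂ y)
      have he : (x - γ • B₂ x) - (y - γ • B₂ y) = (x - y) - γ • (B₂ x - B₂ y) := by module
      rw [he] at h
      exact h
    rw [hv]
    exact aux_S_nonexpansive κ γ δ hκ hγ0 hγ2κ hδ (x - y) (T x - T y) (B₂ x - B₂ y) hF1 (hco x y)
  -- fixed points vs zeros
  have hfix_of_zer : ∀ z : H, (∃ u ∈ B₁ z, u + B₂ z = 0) → S z = z := by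
    rintro z ⟨u, hu, huz⟩
    have hB2z : B₂ z = -u := by
      have : u + B₂ z = 0 := huz
      exact by linear_combination (norm := module) this
    have hTzz : T z = z := by
      rw [hTz]
      refine (hRuniq _ _ ⟨u, hu, ?_⟩).symm
      rw [hB2z]; module
    rw [hSz, hTzz]; simp
  have hzer_of_fix : ∀ z : H, S z = z → ∃ u ∈ B₁ z, u + B₂ z = 0 := by
    intro z hz
    have hTzz : T z = z := by
      have h0 : δ • (T z - z) = 0 := by
        have h1 : z + δ • (T z - z) = z := by rw [← hSz]; exact hz
        have := add_eq_left.mp h1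
        exact this
      rcases smul_eq_zero.mp h0 with h | h
      · exact absurd h (ne_of_gt hδ0)
      · have := sub_eq_zero.mp h; exact this
    obtain ⟨w, hw, hw'⟩ := hRres (z - γ • B₂ z)
    have hRz : R (z - γ • B₂ z) = z := by rw [← hTz]; exact hTzz
    rw [hRz] at hw hw'
    have hwz : w = -B₂ z := by
      have h1 : γ • (-B₂ z) = γ • w := by
        rw [← hw']; module
      have := smul_right_injective H (ne_of_gt hγ0) h1
      exact this.symm
    refine ⟨w, hw, ?_⟩
    rw [hwz]; simp
  obtain ⟨z, hzfix⟩ : ∃ z, S z = z := by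
    obtain ⟨z0, u, hu, h⟩ := hzer
    exact ⟨z0, hfix_of_zer z0 ⟨u, hu, h⟩⟩
  -- iteration in terms of S
  set lam : ℕ → ℝ := fun n => ρ n / δ with hlamdef
  have hlam0 : ∀ n, 0 < lam n := fun n => div_pos (hρ n).1 hδ0
  have hlam1 : ∀ n, lam n < 1 := fun n => (div_lt_one hδ0).mpr (hρ n).2
  have hrec : ∀ n, s (n + 1) = s n + lam n • (S (s n) - s n) := by
    intro n
    have hδne : δ ≠ 0 := ne_of_gt hδ0
    have h1 : S (s n) - s n = δ • (T (s n) - s n) := by rw [hSz]; abel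
    rw [hs n, h1, show lam n = ρ n / δ from rfl, smul_smul, div_mul_cancel₀ _ hδne,
      show T (s n) = R (s n - γ • B₂ (s n)) from rfl]
    module
  -- descent inequality
  have hdescent : ∀ z', S z' = z' → ∀ n,
      ‖s (n+1) - z'‖ ^ 2 ≤ ‖s n - z'‖ ^ 2 - lam n * (1 - lam n) * ‖S (s n) - s n‖ ^ 2 := by
    intro z' hz' n
    have hv : s (n+1) - z' = (1 - lam n) • (s n - z') + lam n • (S (s n) - z') := by
      rw [hrec n]; module
    have hle : ‖S (s n) - z'‖ ≤ ‖s n - z'‖ := by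
      calc ‖S (s n) - z'‖ = ‖S (s n) - S z'‖ := by rw [hz']
        _ ≤ ‖s n - z'‖ := hSnon _ _
    have h2 : ‖S (s n) - z'‖ ^ 2 ≤ ‖s n - z'‖ ^ 2 := pow_le_pow_left₀ (norm_nonneg _) hle 2
    have hd : (s n - z') - (S (s n) - z') = -(S (s n) - s n) := by abel
    rw [hv, aux_convex_norm_sq, hd, norm_neg]
    nlinarith [hlam0 n, hlam1 n, h2]
  have hsqanti : ∀ z', S z' = z' → Antitone fun n => ‖s n - z'‖ ^ 2 := by
    intro z' hz'
    apply antitone_nat_of_succ_le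
    intro n
    have h := hdescent z' hz' n
    have h2 : 0 ≤ lam n * (1 - lam n) * ‖S (s n) - s n‖ ^ 2 :=
      mul_nonneg (mul_nonneg (hlam0 n).le (by linarith [hlam1 n])) (sq_nonneg _)
    nlinarith [h, h2]
  -- boundedness
  have hnormanti : ∀ z', S z' = z' → ∀ m n, m ≤ n → ‖s n - z'‖ ≤ ‖s m - z'‖ := by
    intro z' hz' m n hmn
    exact aux_norm_le_of_sq _ _ (hsqanti z' hz' hmn)
  have hCb : ∀ n, ‖s n‖ ≤ ‖s 0 - z‖ + ‖z‖ := by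
    intro n
    calc ‖s n‖ = ‖(s n - z) + z‖ := by rw [sub_add_cancel]
      _ ≤ ‖s n - z‖ + ‖z‖ := norm_add_le _ _
      _ ≤ ‖s 0 - z‖ + ‖z‖ := by
          have := hnormanti z hzfix 0 n (Nat.zero_le n); linarith
  set d : ℕ → ℝ := fun n => ‖S (s n) - s n‖ with hddef
  have hdnn : ∀ n, 0 ≤ d n := fun n => norm_nonneg _
  set c : ℕ → ℝ := fun n => lam n * (1 - lam n) with hcdef
  have hc0 : ∀ n, 0 ≤ c n :=
    fun n => mul_nonneg (hlam0 n).le (by linarith [hlam1 n])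
  -- partial sums bounded
  have hsumb : ∀ N, ∑ n ∈ Finset.range N, c n * d n ^ 2 ≤ ‖s 0 - z‖ ^ 2 := by
    intro N
    have key : ∀ N, ∑ n ∈ Finset.range N, c n * d n ^ 2 ≤ ‖s 0 - z‖ ^ 2 - ‖s N - z‖ ^ 2 := by
      intro N
      induction N with
      | zero => simp
      | succ N ih =>
        rw [Finset.sum_range_succ]
        have h := hdescent z hzfix N
        have : c N * d N ^ 2 = lam N * (1 - lam N) * ‖S (s N) - s N‖ ^ 2 := rfl
        rw [this]
        linarith
    have := key N
    nlinarith [sq_nonneg ‖s N - z‖]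
  -- d is antitone
  have hdanti : Antitone d := by
    apply antitone_nat_of_succ_le
    intro n
    have h1 : S (s n) - s (n + 1) = (1 - lam n) • (S (s n) - s n) := by
      rw [hrec n]; module
    have h2 : s (n + 1) - s n = lam n • (S (s n) - s n) := by
      rw [hrec n]; module
    have hlam1' : (0:ℝ) ≤ 1 - lam n := by linarith [hlam1 n]
    calc d (n + 1) = ‖S (s (n + 1)) - s (n + 1)‖ := rfl
      _ ≤ ‖S (s (n + 1)) - S (s n)‖ + ‖S (s n) - s (n + 1)‖ :=
          norm_sub_le_norm_sub_add_norm_sub _ _ _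
      _ ≤ ‖s (n + 1) - s n‖ + (1 - lam n) * ‖S (s n) - s n‖ := by
          rw [h1, norm_smul, Real.norm_eq_abs, abs_of_nonneg hlam1']
          exact add_le_add_left (hSnon _ _) _
      _ = lam n * ‖S (s n) - s n‖ + (1 - lam n) * ‖S (s n) - s n‖ := by
          rw [h2, norm_smul, Real.norm_eq_abs, abs_of_nonneg (hlam0 n).le]
      _ = d n := by rw [hddef]; ring
  -- sum of c diverges
  have hcsum : Tendsto (fun N => ∑ n ∈ Finset.range N, c n) atTop atTop := by
    have he : ∀ N, ∑ n ∈ Finset.range N, c n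
        = (∑ n ∈ Finset.range N, ρ n * (δ - ρ n)) * (1 / δ ^ 2) := by
      intro N
      rw [Finset.sum_mul]
      refine Finset.sum_congr rfl fun n _ => ?_
      have : c n = lam n * (1 - lam n) := rfl
      rw [this, show lam n = ρ n / δ from rfl]
      field_simp
    simp only [he]
    exact hρsum.atTop_mul_const (by positivity)
  -- d tends to 0
  have hd0 : Tendsto d atTop (𝓝 0) := by
    have key : ∀ ε : ℝ, 0 < ε → ∃ N, d N < ε := by
      intro ε hε
      by_contra hcon
      push_neg at hcon
      have hb : ∀ N, ∑ n ∈ Finset.range N, c n ≤ ‖s 0 - z‖ ^ 2 / ε ^ 2 := by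
        intro N
        have h2 : (∑ n ∈ Finset.range N, c n) * ε ^ 2 ≤ ∑ n ∈ Finset.range N, c n * d n ^ 2 := by
          rw [Finset.sum_mul]
          refine Finset.sum_le_sum fun n _ => ?_
          exact mul_le_mul_of_nonneg_left (by nlinarith [hcon n, hε.le, hdnn n]) (hc0 n)
        rw [le_div_iff₀ (by positivity)]
        exact h2.trans (hsumb N)
      obtain ⟨N, hN⟩ := (hcsum.eventually_gt_atTop (‖s 0 - z‖ ^ 2 / ε ^ 2)).exists
      exact absurd (hb N) (not_le.mpr hN)
    rw [Metric.tendsto_atTop]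
    intro ε hε
    obtain ⟨N, hN⟩ := key ε hε
    refine ⟨N, fun n hn => ?_⟩
    rw [Real.dist_eq, sub_zero, abs_of_nonneg (hdnn n)]
    exact lt_of_le_of_lt (hdanti hn) hN
  -- limits of distances to fixed points exist
  have hlimex : ∀ z', S z' = z' → ∃ L, Tendsto (fun n => ‖s n - z'‖ ^ 2) atTop (𝓝 L) := by
    intro z' hz'
    refine ⟨_, tendsto_atTop_ciInf (hsqanti z' hz') ⟨0, ?_⟩⟩
    rintro x ⟨n, rfl⟩
    positivity
  -- ultrafilter weak limits are fixed points
  have key : ∀ U : Ultrafilter ℕ, (U : Filter ℕ) ≤ atTop →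
      ∃ p, S p = p ∧ ∀ w, Tendsto (fun n => ⟪s n, w⟫) (U : Filter ℕ) (𝓝 ⟪p, w⟫) := by
    intro U hU
    obtain ⟨p, hp⟩ := aux_ultrafilter_weak_limit s _ hCb U
    refine ⟨p, ?_, hp⟩
    set M : ℝ := ‖s 0 - z‖ + ‖z‖ + ‖p‖ with hM
    have hMb : ∀ n, ‖s n - p‖ ≤ M := fun n =>
      (norm_sub_le _ _).trans (by rw [hM]; linarith [hCb n])
    have hineq : ∀ n, ‖p - S p‖ ^ 2
        ≤ 2 * d n * ‖s n - p‖ + d n ^ 2 + 2 * (⟪s n, S p - p⟫ - ⟪p, S p - p⟫) := by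
      intro n
      have h1 : ‖s n - S p‖ ≤ d n + ‖s n - p‖ := by
        calc ‖s n - S p‖ ≤ ‖s n - S (s n)‖ + ‖S (s n) - S p‖ :=
              norm_sub_le_norm_sub_add_norm_sub _ _ _
          _ ≤ d n + ‖s n - p‖ := by
              refine add_le_add ?_ (hSnon _ _)
              rw [norm_sub_rev]
      have h2 : ‖s n - S p‖ ^ 2 ≤ (d n + ‖s n - p‖) ^ 2 :=
        pow_le_pow_left₀ (norm_nonneg _) h1 2
      have e1 : ‖s n - S p‖ ^ 2
          = ‖s n - p‖ ^ 2 - 2 * ⟪s n - p, S p - p⟫ + ‖S p - p‖ ^ 2 := by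
        rw [show s n - S p = (s n - p) - (S p - p) by abel]
        exact norm_sub_sq_real _ _
      have e2 : ⟪s n - p, S p - p⟫ = ⟪s n, S p - p⟫ - ⟪p, S p - p⟫ := inner_sub_left _ _ _
      have e3 : ‖p - S p‖ = ‖S p - p‖ := norm_sub_rev _ _
      rw [e3]
      nlinarith [h2, e1, e2, sq_nonneg (d n + ‖s n - p‖)]
    have hd0U : Tendsto d (U : Filter ℕ) (𝓝 0) := hd0.mono_left hU
    have ht1 : Tendsto (fun n => 2 * d n * ‖s n - p‖) (U : Filter ℕ) (𝓝 0) := by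
      have hb : ∀ n, 2 * d n * ‖s n - p‖ ≤ 2 * M * d n := by
        intro n
        have := hMb n
        nlinarith [hdnn n, norm_nonneg (s n - p)]
      refine squeeze_zero (fun n => by positivity) hb ?_
      simpa using hd0U.const_mul (2 * M)
    have ht2 : Tendsto (fun n => d n ^ 2) (U : Filter ℕ) (𝓝 0) := by
      have := hd0U.mul hd0U
      simpa [pow_two] using this
    have ht3 : Tendsto (fun n => 2 * (⟪s n, S p - p⟫ - ⟪p, S p - p⟫)) (U : Filter ℕ) (𝓝 0) := by
      have := ((hp (S p - p)).sub_const ⟪p, S p - p⟫).const_mul 2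
      simpa using this
    have htot : Tendsto
        (fun n => 2 * d n * ‖s n - p‖ + d n ^ 2 + 2 * (⟪s n, S p - p⟫ - ⟪p, S p - p⟫))
        (U : Filter ℕ) (𝓝 0) := by
      have := (ht1.add ht2).add ht3
      simpa using this
    have h0 : ‖p - S p‖ ^ 2 ≤ 0 := ge_of_tendsto htot (Eventually.of_forall hineq)
    have h1 : ‖p - S p‖ = 0 :=
      le_antisymm (by nlinarith [norm_nonneg (p - S p)]) (norm_nonneg _)
    have := norm_eq_zero.mp h1
    have := sub_eq_zero.mp this
    exact this.symm
  -- weak limit points along distinct ultrafilters coincide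
  obtain ⟨p₀, hp₀fix, hp₀⟩ := key (Ultrafilter.of atTop) (Ultrafilter.of_le _)
  have huniq : ∀ U : Ultrafilter ℕ, (U : Filter ℕ) ≤ atTop → ∀ p, S p = p →
      (∀ w, Tendsto (fun n => ⟪s n, w⟫) (U : Filter ℕ) (𝓝 ⟪p, w⟫)) → p = p₀ := by
    intro U hU p hpfix hp
    obtain ⟨L1, hL1⟩ := hlimex p hpfix
    obtain ⟨L2, hL2⟩ := hlimex p₀ hp₀fix
    have hf : Tendsto (fun n => ⟪s n, p - p₀⟫) atTop
        (𝓝 ((L2 - L1 - ‖p₀‖ ^ 2 + ‖p‖ ^ 2) / 2)) := by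
      have he : ∀ n : ℕ, ⟪s n, p - p₀⟫
          = (‖s n - p₀‖ ^ 2 - ‖s n - p‖ ^ 2 - ‖p₀‖ ^ 2 + ‖p‖ ^ 2) / 2 := by
        intro n
        have h1 : ‖s n - p₀‖ ^ 2 = ‖s n‖ ^ 2 - 2 * ⟪s n, p₀⟫ + ‖p₀‖ ^ 2 :=
          norm_sub_sq_real _ _
        have h2 : ‖s n - p‖ ^ 2 = ‖s n‖ ^ 2 - 2 * ⟪s n, p⟫ + ‖p‖ ^ 2 :=
          norm_sub_sq_real _ _
        have h3 : ⟪s n, p - p₀⟫ = ⟪s n, p⟫ - ⟪s n, p₀⟫ := inner_sub_right _ _ _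
        rw [h3]
        linarith
      simp only [he]
      exact (((hL2.sub hL1).sub_const (‖p₀‖ ^ 2)).add_const (‖p‖ ^ 2)).div_const 2
    have e1 : ⟪p, p - p₀⟫ = (L2 - L1 - ‖p₀‖ ^ 2 + ‖p‖ ^ 2) / 2 :=
      tendsto_nhds_unique (hp (p - p₀)) (hf.mono_left hU)
    have e2 : ⟪p₀, p - p₀⟫ = (L2 - L1 - ‖p₀‖ ^ 2 + ‖p‖ ^ 2) / 2 :=
      tendsto_nhds_unique (hp₀ (p - p₀)) (hf.mono_left (Ultrafilter.of_le _))
    have e3 : ⟪p - p₀, p - p₀⟫ = (0:ℝ) := by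
      rw [inner_sub_left]
      linarith
    have := inner_self_eq_zero.mp e3
    exact sub_eq_zero.mp this
  refine ⟨p₀, ?_, hzer_of_fix p₀ hp₀fix⟩
  intro w
  rw [tendsto_iff_ultrafilter]
  intro U hU
  obtain ⟨p, hpfix, hp⟩ := key U hU
  have hpp := huniq U hU p hpfix hp
  rw [← hpp]
  exact hp w

end
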